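/- Let θ ∈ (−1, 1). Then (1/2)∫_{a₂}^{∞} dx / ((x−ξ)² sqrt((x−a₁)(x−a₂))) = (2/((θ²−1)(a₂−a₁)²))·(θ·arccos(θ)/sqrt(1−θ²) − 1), where ξ = (a₁+a₂)/2 − θ(a₂−a₁)/2 and a₁ < ξ < a₂. -/

import Mathlib

open MeasureTheory Set Filter Topology

set_option maxHeartbeats 1000000 in
/-- For `a₁ < a₂`, `θ ∈ (−1,1)` and `ξ = (a₁+a₂)/2 − θ(a₂−a₁)/2`:
`(1/2)∫_{a₂}^{∞} dx / ((x−ξ)² √((x−a₁)(x−a₂)))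
 = (2/((θ²−1)(a₂−a₁)²))·(θ·arccos θ/√(1−θ²) − 1)`. -/
theorem stmt_17 (a₁ a₂ θ ξ : ℝ) (ha : a₁ < a₂) (hθ1 : -1 < θ) (hθ2 : θ < 1)
    (hξ : ξ = (a₁ + a₂) / 2 - θ * (a₂ - a₁) / 2) :
    (1 / 2) * ∫ x in Ioi a₂, 1 / ((x - ξ) ^ 2 * Real.sqrt ((x - a₁) * (x - a₂))) =
      2 / ((θ ^ 2 - 1) * (a₂ - a₁) ^ 2) *
        (θ * Real.arccos θ / Real.sqrt (1 - θ ^ 2) - 1) := by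
  set d : ℝ := (a₂ - a₁) / 2 with hd_def
  set c : ℝ := (a₁ + a₂) / 2 with hc_def
  set k : ℝ := Real.sqrt (1 - θ ^ 2) with hk_def
  have hd : 0 < d := by rw [hd_def]; linarith
  have hθsq : 0 < 1 - θ ^ 2 := by nlinarith
  have hk : 0 < k := Real.sqrt_pos.mpr hθsq
  have hksq : k ^ 2 = 1 - θ ^ 2 := Real.sq_sqrt hθsq.le
  have hξa₂ : 0 < a₂ - ξ := by rw [hξ]; nlinarith
  set F : ℝ → ℝ := fun x =>
    (1 / (d ^ 2 * (1 - θ ^ 2))) *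
      (Real.sqrt ((x - a₁) * (x - a₂)) / (x - ξ)
        - (θ / k) * Real.arccos ((d + θ * (x - c)) / (x - ξ))) with hF_def
  set m : ℝ := (1 / (d ^ 2 * (1 - θ ^ 2))) * (1 - (θ / k) * Real.arccos θ) with hm_def
  clear_value F m d c k
  -- derivative
  have hderiv : ∀ x ∈ Ioi a₂, HasDerivAt F
      (1 / ((x - ξ) ^ 2 * Real.sqrt ((x - a₁) * (x - a₂)))) x := by
    intro x hx
    have hx2 : a₂ < x := hx
    have hx1 : 0 < x - a₁ := by linarith
    have hx2' : 0 < x - a₂ := by linarith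
    have hxξ : 0 < x - ξ := by linarith
    have hp : 0 < (x - a₁) * (x - a₂) := mul_pos hx1 hx2'
    set s : ℝ := Real.sqrt ((x - a₁) * (x - a₂)) with hs_def
    have hs : 0 < s := Real.sqrt_pos.mpr hp
    have hssq : s ^ 2 = (x - a₁) * (x - a₂) := Real.sq_sqrt hp.le
    have hH1 : (d + θ * (x - c)) / (x - ξ) < 1 := by
      rw [div_lt_one hxξ]; rw [hξ, hd_def, hc_def] at *; nlinarith
    have hHm1 : -1 < (d + θ * (x - c)) / (x - ξ) := by
      rw [lt_div_iff₀ hxξ]; rw [hξ, hd_def, hc_def] at *; nlinarith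
    have halg : (x - ξ) ^ 2 - (d + θ * (x - c)) ^ 2 = (1 - θ ^ 2) * ((x - a₁) * (x - a₂)) := by
      rw [hξ, hd_def, hc_def]; ring
    have hsqH : Real.sqrt (1 - ((d + θ * (x - c)) / (x - ξ)) ^ 2) = k * s / (x - ξ) := by
      have h1 : 1 - ((d + θ * (x - c)) / (x - ξ)) ^ 2 = (k * s / (x - ξ)) ^ 2 := by
        rw [div_pow, div_pow, mul_pow, hksq, hssq]
        field_simp
        linarith [halg]
      rw [h1, Real.sqrt_sq (by positivity)]
    have h1 : HasDerivAt (fun y => (y - a₁) * (y - a₂)) ((x - a₂) + (x - a₁)) x := by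
      have h := ((hasDerivAt_id x).sub_const a₁).mul ((hasDerivAt_id x).sub_const a₂)
      simp only [id_eq] at h
      exact h.congr_deriv (by ring)
    have h2 : HasDerivAt (fun y => Real.sqrt ((y - a₁) * (y - a₂)))
        (1 / (2 * s) * ((x - a₂) + (x - a₁))) x :=
      (Real.hasDerivAt_sqrt hp.ne').comp x h1
    have h3 : HasDerivAt (fun y : ℝ => y - ξ) 1 x := (hasDerivAt_id x).sub_const ξ
    have h4 : HasDerivAt (fun y => Real.sqrt ((y - a₁) * (y - a₂)) / (y - ξ))
        ((1 / (2 * s) * ((x - a₂) + (x - a₁)) * (x - ξ) - s * 1) / (x - ξ) ^ 2) x :=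
      h2.div h3 hxξ.ne'
    have h5 : HasDerivAt (fun y => d + θ * (y - c)) θ x := by
      have := (((hasDerivAt_id x).sub_const c).const_mul θ).const_add d
      simpa using this
    have h6 : HasDerivAt (fun y => (d + θ * (y - c)) / (y - ξ))
        ((θ * (x - ξ) - (d + θ * (x - c)) * 1) / (x - ξ) ^ 2) x := h5.div h3 hxξ.ne'
    have h7 : HasDerivAt (fun y => Real.arccos ((d + θ * (y - c)) / (y - ξ)))
        (-(1 / Real.sqrt (1 - ((d + θ * (x - c)) / (x - ξ)) ^ 2)) *
          ((θ * (x - ξ) - (d + θ * (x - c)) * 1) / (x - ξ) ^ 2)) x :=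
      by have h7' := (Real.hasDerivAt_arccos hHm1.ne' hH1.ne).comp x h6; exact h7'
    have h8 := (h4.sub (h7.const_mul (θ / k))).const_mul (1 / (d ^ 2 * (1 - θ ^ 2)))
    rw [hF_def]
    refine h8.congr_deriv ?_
    rw [hsqH]
    have key2 : θ * (x - ξ) - (d + θ * (x - c)) * 1 = -(d * (1 - θ ^ 2)) := by
      rw [hξ, hd_def, hc_def]; ring
    rw [key2]
    have key1 : 1 / (2 * s) * ((x - a₂) + (x - a₁)) * (x - ξ) - s * 1
        = d * (d + θ * (x - c)) / s := by
      rw [eq_div_iff hs.ne']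
      have expand : (1 / (2 * s) * ((x - a₂) + (x - a₁)) * (x - ξ) - s * 1) * s
          = ((x - a₂) + (x - a₁)) * (x - ξ) / 2 - s ^ 2 := by
        field_simp
      rw [expand, hssq, hξ, hd_def, hc_def]; ring
    rw [key1]
    have keyN : d + θ * (x - c) - θ * (x - ξ) = d * (1 - θ ^ 2) := by
      rw [hξ, hd_def, hc_def]; ring
    have keyN' : d + θ * (x - c) = θ * (x - ξ) + d * k ^ 2 := by rw [hksq]; linarith [keyN]
    rw [keyN', show (1:ℝ) - θ ^ 2 = k ^ 2 from hksq.symm]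
    have hs0 := hs.ne'
    have hk0 := hk.ne'
    have hd0 := hd.ne'
    have hxξ0 := hxξ.ne'
    field_simp
    ring
  -- continuity at a₂ from the right
  have hxξ0 : a₂ - ξ ≠ 0 := hξa₂.ne'
  have hcont : ContinuousWithinAt F (Ici a₂) a₂ := by
    apply ContinuousAt.continuousWithinAt
    rw [hF_def]
    have c1 : ContinuousAt (fun x => Real.sqrt ((x - a₁) * (x - a₂))) a₂ :=
      Real.continuous_sqrt.continuousAt.comp (by fun_prop)
    have c2 : ContinuousAt (fun x : ℝ => x - ξ) a₂ := by fun_prop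
    have c4 : ContinuousAt (fun x : ℝ => d + θ * (x - c)) a₂ := by fun_prop
    have c5 : ContinuousAt (fun x => Real.arccos ((d + θ * (x - c)) / (x - ξ))) a₂ :=
      Real.continuous_arccos.continuousAt.comp (c4.div c2 hxξ0)
    exact continuousAt_const.mul ((c1.div c2 hxξ0).sub (continuousAt_const.mul c5))
  have hFa₂ : F a₂ = 0 := by
    rw [hF_def]
    have h1 : (a₂ - a₁) * (a₂ - a₂) = 0 := by ring
    have h2 : (d + θ * (a₂ - c)) / (a₂ - ξ) = 1 := by
      rw [div_eq_one_iff_eq hxξ0, hξ, hd_def, hc_def]; ring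
    simp [h1, h2, Real.arccos_one]
  -- limit at infinity
  have hA : Tendsto (fun x : ℝ => x - ξ) atTop atTop := by
    simpa [sub_eq_add_neg] using tendsto_atTop_add_const_right atTop (-ξ) (tendsto_id (α := ℝ))
  have hlim0 : ∀ r : ℝ, Tendsto (fun x : ℝ => r / (x - ξ)) atTop (𝓝 0) :=
    fun r => Tendsto.div_atTop tendsto_const_nhds hA
  have hterm1 : Tendsto (fun x => Real.sqrt ((x - a₁) * (x - a₂)) / (x - ξ)) atTop (𝓝 1) := by
    have base : Tendsto (fun x : ℝ => (1 + (ξ - a₁) / (x - ξ)) * (1 + (ξ - a₂) / (x - ξ)))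
        atTop (𝓝 ((1 + 0) * (1 + 0))) :=
      (tendsto_const_nhds.add (hlim0 _)).mul (tendsto_const_nhds.add (hlim0 _))
    have base' : Tendsto (fun x : ℝ =>
        Real.sqrt ((1 + (ξ - a₁) / (x - ξ)) * (1 + (ξ - a₂) / (x - ξ)))) atTop (𝓝 1) := by
      have := (Real.continuous_sqrt.continuousAt (x := ((1:ℝ) + 0) * (1 + 0))).tendsto.comp base
      simpa [Function.comp_def] using this
    apply base'.congr'
    filter_upwards [eventually_gt_atTop a₂] with x hx
    have hx1 : 0 < x - a₁ := by linarith
    have hx2 : 0 < x - a₂ := by linarith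
    have hxξ : 0 < x - ξ := by linarith
    have key : (1 + (ξ - a₁) / (x - ξ)) * (1 + (ξ - a₂) / (x - ξ))
        = ((x - a₁) * (x - a₂)) / (x - ξ) ^ 2 := by
      field_simp; ring
    rw [key, Real.sqrt_div (by positivity), Real.sqrt_sq hxξ.le]
  have hterm2 : Tendsto (fun x => Real.arccos ((d + θ * (x - c)) / (x - ξ))) atTop
      (𝓝 (Real.arccos θ)) := by
    have base : Tendsto (fun x : ℝ => θ + d * (1 - θ ^ 2) / (x - ξ)) atTop (𝓝 (θ + 0)) :=
      tendsto_const_nhds.add (hlim0 _)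
    have base' : Tendsto (fun x : ℝ => Real.arccos (θ + d * (1 - θ ^ 2) / (x - ξ))) atTop
        (𝓝 (Real.arccos θ)) := by
      have h := (Real.continuous_arccos.continuousAt (x := θ + 0)).tendsto.comp base
      simpa [Function.comp_def] using h
    apply base'.congr'
    filter_upwards [eventually_gt_atTop a₂] with x hx
    have hxξ : 0 < x - ξ := by linarith
    have key : θ + d * (1 - θ ^ 2) / (x - ξ) = (d + θ * (x - c)) / (x - ξ) := by
      rw [hξ, hd_def, hc_def]
      have hx0 : x - ((a₁ + a₂) / 2 - θ * (a₂ - a₁) / 2) ≠ 0 := by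
        rw [hξ, hc_def] at hxξ; linarith
      rw [eq_div_iff hx0, add_mul, div_mul_cancel₀ _ hx0]
      ring
    rw [key]
  have htendF : Tendsto F atTop (𝓝 m) := by
    rw [hF_def, hm_def]
    exact (hterm1.sub (hterm2.const_mul (θ / k))).const_mul _
  have hnonneg : ∀ x ∈ Ioi a₂,
      0 ≤ 1 / ((x - ξ) ^ 2 * Real.sqrt ((x - a₁) * (x - a₂))) := fun x _ => by positivity
  have hint := integral_Ioi_of_hasDerivAt_of_nonneg hcont hderiv hnonneg htendF
  rw [hint, hFa₂, sub_zero, hm_def, hd_def]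
  have hne1 : (a₂ - a₁) ≠ 0 := by linarith
  have hne2 : θ ^ 2 - 1 ≠ 0 := by nlinarith
  field_simp
  ring
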